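/- Let k ≥ 1 and n ≥ 2k, and let 𝒜 be a family of k-element subsets of {1,…,n} such that any two members of 𝒜 have nonempty intersection (equivalently, 𝒜 is an independent set of the Kneser graph K(n,k)). Then |𝒜| ≤ C(n−1, k−1). Moreover, if n > 2k and |𝒜| = C(n−1, k−1), then there exists an element x ∈ {1,…,n} such that 𝒜 consists exactly of all k-element subsets of {1,…,n} containing x. -/

import Mathlib

/-!
Erdős–Ko–Rado theorem with the uniqueness (equality) case, proved via
Katona's cycle method.
-/

open Finset Equiv

namespace EKR

variable {n k : ℕ}

lemma val_add_disj [NeZero n] (x y : ZMod n) :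
    (x + y).val = x.val + y.val ∨ (x + y).val + n = x.val + y.val := by
  have hx := ZMod.val_lt x
  have hy := ZMod.val_lt y
  rw [ZMod.val_add]
  rcases lt_or_ge (x.val + y.val) n with h | h
  · left; exact Nat.mod_eq_of_lt h
  · right
    rw [Nat.mod_eq_sub_mod h, Nat.mod_eq_of_lt (by omega)]
    omega

lemma val_sub_add_val [NeZero n] {x y : ZMod n} (h : x ≠ y) :
    (x - y).val + (y - x).val = n := by
  have h1 : x - y ≠ 0 := sub_ne_zero.2 h
  have h2 : y - x = -(x - y) := by ring
  rw [h2, ZMod.neg_val, if_neg h1]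
  have := ZMod.val_lt (x - y)
  have h3 : (x - y).val ≠ 0 := by
    simpa [ZMod.val_eq_zero] using h1
  omega

lemma cast_val_eq [NeZero n] (x : ZMod n) : ((x.val : ℕ) : ZMod n) = x :=
  ZMod.natCast_rightInverse x

/-- the arc (cyclic interval) of length `k` starting at `a` -/
def arc (k : ℕ) (a : ZMod n) : Finset (ZMod n) :=
  (Finset.range k).image (fun j => a + (j : ℕ))

lemma mem_arc [NeZero n] (hkn : k ≤ n) {a x : ZMod n} :
    x ∈ arc k a ↔ (x - a).val < k := by
  constructor
  · rintro hx
    obtain ⟨j, hj, rfl⟩ := Finset.mem_image.1 hx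
    rw [Finset.mem_range] at hj
    have : a + (j : ℕ) - a = (j : ℕ) := by ring
    rw [this, ZMod.val_natCast, Nat.mod_eq_of_lt (by omega)]
    exact hj
  · intro hx
    refine Finset.mem_image.2 ⟨(x - a).val, Finset.mem_range.2 hx, ?_⟩
    rw [cast_val_eq]; ring

lemma card_arc [NeZero n] (hkn : k ≤ n) (a : ZMod n) : (arc k a).card = k := by
  rw [arc, Finset.card_image_of_injOn, Finset.card_range]
  intro i hi j hj hij
  simp only [Finset.coe_range, Set.mem_Iio] at hi hj
  have : ((i : ℕ) : ZMod n) = ((j : ℕ) : ZMod n) := by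
    have := add_left_cancel hij
    exact_mod_cast this
  have := congrArg ZMod.val this
  rwa [ZMod.val_natCast, ZMod.val_natCast, Nat.mod_eq_of_lt (by omega),
    Nat.mod_eq_of_lt (by omega)] at this

lemma arc_image_add [NeZero n] (a c : ZMod n) :
    (arc k a).image (· + c) = arc k (a + c) := by
  rw [arc, Finset.image_image, arc]
  congr 1
  funext j
  simp only [Function.comp_apply]
  ring


/-- arcs `a` and `b` intersect iff their starts are within distance `k` -/
lemma arcs_intersect [NeZero n] (hkn : k ≤ n) {a b : ZMod n}
    (h : (arc k a ∩ arc k b).Nonempty) : (a - b).val < k ∨ (b - a).val < k := by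
  obtain ⟨x, hx⟩ := h
  rw [Finset.mem_inter, mem_arc hkn, mem_arc hkn] at hx
  obtain ⟨h1, h2⟩ := hx
  by_cases hab : a = b
  · left; simp [hab, ZMod.val_zero, lt_of_lt_of_le h1 (le_refl _)]
    omega
  have hsum := val_sub_add_val hab
  -- (x - b) = (x - a) + (a - b)
  have hrel : (x - b) = (x - a) + (a - b) := by ring
  have := val_add_disj (n := n) (x - a) (a - b)
  rw [← hrel] at this
  have hv1 := ZMod.val_lt (x - a)
  have hv2 := ZMod.val_lt (a - b)
  omega


/-- pairwise intersecting arcs: at most `k` starts -/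
lemma card_le_of_pairwise_arcs [NeZero n] (hk : 1 ≤ k) (hn : 2 * k ≤ n) {S : Finset (ZMod n)}
    (hS : ∀ a ∈ S, ∀ b ∈ S, (arc k a ∩ arc k b).Nonempty) : S.card ≤ k := by
  have hkn : k ≤ n := by omega
  rcases S.eq_empty_or_nonempty with rfl | ⟨a₀, ha₀⟩
  · simp
  classical
  set f : ZMod n → ℕ := fun a => if (a - a₀).val < k then (a - a₀).val else (a - a₀).val - (n - k)
    with hf
  have key : ∀ a ∈ S, (a - a₀).val < k ∨ ((a - a₀).val < n ∧ n - k + 1 ≤ (a - a₀).val) := by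
    intro a ha
    have hv := ZMod.val_lt (a - a₀)
    by_cases hne : a = a₀
    · left
      rw [hne, sub_self, ZMod.val_zero]
      exact hk
    · have hsum := val_sub_add_val hne
      rcases arcs_intersect hkn (hS a ha a₀ ha₀) with h | h
      · left; exact h
      · right; omega
  have hmaps : ∀ a ∈ S, f a ∈ Finset.range k := by
    intro a ha
    rcases key a ha with h | h <;> simp only [hf, Finset.mem_range] <;> split <;> omega
  have hinj : Set.InjOn f S := by
    intro a ha b hb hab
    by_contra hne
    have hsumab := val_sub_add_val hne
    have hvi : (a - a₀).val ≠ (b - a₀).val := by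
      intro h
      apply hne
      have := congrArg (fun m : ℕ => (m : ZMod n)) h
      simp only [cast_val_eq] at this
      exact sub_left_injective this
    rcases arcs_intersect hkn (hS a ha b hb) with hiab | hiab <;>
    · have hrel : (a - a₀) = (a - b) + (b - a₀) := by ring
      have hd := val_add_disj (n := n) (a - b) (b - a₀)
      rw [← hrel] at hd
      have hv1 := ZMod.val_lt (a - a₀)
      have hv2 := ZMod.val_lt (b - a₀)
      have hv3 := ZMod.val_lt (a - b)
      have hka := key a ha
      have hkb := key b hb
      simp only [hf] at hab
      split at hab <;> split at hab <;> omega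
  calc S.card ≤ (Finset.range k).card := Finset.card_le_card_of_injOn f hmaps hinj
    _ = k := Finset.card_range k


/-- the window of starts of arcs through `q` has exactly `k` elements -/
lemma card_window [NeZero n] (hkn : k ≤ n) (q : ZMod n) :
    (Finset.univ.filter (fun a : ZMod n => (q - a).val < k)).card = k := by
  classical
  have himg : Finset.univ.filter (fun a : ZMod n => (q - a).val < k)
      = (Finset.range k).image (fun m : ℕ => q - (m : ℕ)) := by
    ext a
    simp only [Finset.mem_filter, Finset.mem_univ, true_and, Finset.mem_image, Finset.mem_range]
    constructor
    · intro h
      exact ⟨(q - a).val, h, by rw [cast_val_eq]; ring⟩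
    · rintro ⟨m, hm, rfl⟩
      have : q - (q - (m : ℕ)) = ((m : ℕ) : ZMod n) := by ring
      rw [this, ZMod.val_natCast, Nat.mod_eq_of_lt (by omega)]
      exact hm
  rw [himg, Finset.card_image_of_injOn, Finset.card_range]
  intro i hi j hj hij
  simp only [Finset.coe_range, Set.mem_Iio] at hi hj
  have h2 : ((i : ℕ) : ZMod n) = ((j : ℕ) : ZMod n) := sub_right_injective hij
  have := congrArg ZMod.val h2
  rwa [ZMod.val_natCast, ZMod.val_natCast, Nat.mod_eq_of_lt (by omega),
    Nat.mod_eq_of_lt (by omega)] at this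

/-- Window structure lemma: `k` pairwise-intersecting arc starts form a window. -/
lemma window_of_card [NeZero n] (hk : 1 ≤ k) (hn : 2 * k + 1 ≤ n) {S : Finset (ZMod n)}
    (hcard : S.card = k)
    (hS : ∀ a ∈ S, ∀ b ∈ S, (arc k a ∩ arc k b).Nonempty) :
    ∃ q : ZMod n, ∀ a, a ∈ S ↔ (q - a).val < k := by
  classical
  have hkn : k ≤ n := by omega
  have hne : S.Nonempty := Finset.card_pos.1 (by omega)
  obtain ⟨a₀, ha₀⟩ := hne
  set f : ZMod n → ℕ := fun a => if (a - a₀).val < k then (a - a₀).val else (a - a₀).val - (n - k)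
    with hf
  have key : ∀ a ∈ S, (a - a₀).val < k ∨ ((a - a₀).val < n ∧ n - k + 1 ≤ (a - a₀).val) := by
    intro a ha
    have hv := ZMod.val_lt (a - a₀)
    by_cases hne : a = a₀
    · left
      rw [hne, sub_self, ZMod.val_zero]
      exact hk
    · have hsum := val_sub_add_val hne
      rcases arcs_intersect hkn (hS a ha a₀ ha₀) with h | h
      · left; exact h
      · right; omega
  have hmaps : ∀ a ∈ S, f a ∈ Finset.range k := by
    intro a ha
    rcases key a ha with h | h <;> simp only [hf, Finset.mem_range] <;> split <;> omega
  have hinj : Set.InjOn f S := by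
    intro a ha b hb hab
    by_contra hne
    have hsumab := val_sub_add_val hne
    have hvi : (a - a₀).val ≠ (b - a₀).val := by
      intro h
      apply hne
      have := congrArg (fun m : ℕ => (m : ZMod n)) h
      simp only [cast_val_eq] at this
      exact sub_left_injective this
    rcases arcs_intersect hkn (hS a ha b hb) with hiab | hiab <;>
    · have hrel : (a - a₀) = (a - b) + (b - a₀) := by ring
      have hd := val_add_disj (n := n) (a - b) (b - a₀)
      rw [← hrel] at hd
      have hrel' : (b - a₀) = (b - a) + (a - a₀) := by ring
      have hd' := val_add_disj (n := n) (b - a) (a - a₀)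
      rw [← hrel'] at hd'
      have hv4 := ZMod.val_lt (b - a)
      have hv1 := ZMod.val_lt (a - a₀)
      have hv2 := ZMod.val_lt (b - a₀)
      have hv3 := ZMod.val_lt (a - b)
      have hka := key a ha
      have hkb := key b hb
      simp only [hf] at hab
      split at hab <;> split at hab <;> omega
  -- image of f is all of range k
  have himg : S.image f = Finset.range k := by
    apply Finset.eq_of_subset_of_card_le
    · intro m hm
      obtain ⟨a, ha, rfl⟩ := Finset.mem_image.1 hm
      exact hmaps a ha
    · rw [Finset.card_range, Finset.card_image_of_injOn hinj, hcard]
  have hsurj : ∀ m, m < k → ∃ a ∈ S, f a = m := by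
    intro m hm
    have : m ∈ S.image f := by rw [himg]; exact Finset.mem_range.2 hm
    obtain ⟨a, ha, hfa⟩ := Finset.mem_image.1 this
    exact ⟨a, ha, hfa⟩
  -- characterize fibers
  have hfiber : ∀ a ∈ S, a = a₀ + ((f a : ℕ) : ZMod n) ∨
      a = a₀ + ((f a : ℕ) : ZMod n) - ((k : ℕ) : ZMod n) := by
    intro a ha
    obtain ⟨m, hm⟩ : ∃ m, f a = m := ⟨_, rfl⟩
    rw [hm]
    rcases key a ha with h | h
    · left
      have hfa : m = (a - a₀).val := by rw [← hm]; simp only [hf]; rw [if_pos h]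
      rw [hfa, cast_val_eq]; ring
    · right
      have hfa : m = (a - a₀).val - (n - k) := by rw [← hm]; simp only [hf]; rw [if_neg (by omega)]
      have hcast : ((m + (n - k) : ℕ) : ZMod n) = a - a₀ := by
        rw [hfa]
        have h3 : (a - a₀).val - (n - k) + (n - k) = (a - a₀).val := by omega
        rw [h3, cast_val_eq]
      have h2 : ((m : ℕ) : ZMod n) + ((n : ℕ) : ZMod n) - ((k : ℕ) : ZMod n) = a - a₀ := by
        rw [← hcast]
        push_cast [Nat.cast_sub (by omega : k ≤ n)]
        ring
      rw [ZMod.natCast_self] at h2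
      linear_combination -h2
  have hfval1 : ∀ m : ℕ, m < k → f (a₀ + (m : ℕ)) = m := by
    intro m hm
    have h1 : a₀ + (m : ℕ) - a₀ = ((m : ℕ) : ZMod n) := by ring
    simp only [hf, h1, ZMod.val_natCast, Nat.mod_eq_of_lt (by omega : m < n)]
    rw [if_pos hm]
  have hfval2 : ∀ m : ℕ, m < k → f (a₀ + (m : ℕ) - (k : ℕ)) = m := by
    intro m hm
    have h1 : a₀ + (m : ℕ) - (k : ℕ) - a₀ = ((m : ℕ) : ZMod n) - ((k : ℕ) : ZMod n) := by ring
    have h2 : ((m : ℕ) : ZMod n) - ((k : ℕ) : ZMod n) = ((n + m - k : ℕ) : ZMod n) := by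
      push_cast [Nat.cast_sub (by omega : k ≤ n + m)]
      rw [ZMod.natCast_self]
      ring
    have h3 : (((n + m - k : ℕ) : ZMod n)).val = n + m - k := by
      rw [ZMod.val_natCast, Nat.mod_eq_of_lt (by omega)]
    simp only [hf, h1, h2, h3]
    rw [if_neg (by omega)]
    omega
  have hkne : ((k : ℕ) : ZMod n) ≠ 0 := by
    intro h
    have := congrArg ZMod.val h
    rw [ZMod.val_natCast, Nat.mod_eq_of_lt (by omega), ZMod.val_zero] at this
    omega
  -- exclusivity
  have hexcl : ∀ m : ℕ, m < k → ¬(a₀ + (m : ℕ) ∈ S ∧ a₀ + (m : ℕ) - (k : ℕ) ∈ S) := by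
    rintro m hm ⟨h1, h2⟩
    have := hinj h1 h2 (by rw [hfval1 m hm, hfval2 m hm])
    exact hkne (by linear_combination this)
  -- descent
  have hdesc : ∀ m : ℕ, m + 1 < k → a₀ + (m : ℕ) - (k : ℕ) ∈ S → a₀ + ((m+1 : ℕ)) ∉ S := by
    intro m hm h1 h2
    have hint := arcs_intersect hkn (hS _ h2 _ h1)
    have he1 : a₀ + ((m+1 : ℕ)) - (a₀ + (m : ℕ) - (k : ℕ)) = ((k+1 : ℕ) : ZMod n) := by
      push_cast; ring
    have he2 : (a₀ + (m : ℕ) - (k : ℕ)) - (a₀ + ((m+1 : ℕ))) = ((n - (k+1) : ℕ) : ZMod n) := by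
      push_cast [Nat.cast_sub (by omega : k + 1 ≤ n)]
      rw [ZMod.natCast_self]
      ring
    rw [he1, he2, ZMod.val_natCast, ZMod.val_natCast, Nat.mod_eq_of_lt (by omega),
      Nat.mod_eq_of_lt (by omega)] at hint
    omega
  -- the set of "low" indices
  set F : Finset ℕ := (Finset.range k).filter (fun m => a₀ + (m : ℕ) ∈ S) with hF
  have hFne : F.Nonempty := by
    refine ⟨0, Finset.mem_filter.2 ⟨Finset.mem_range.2 (by omega), ?_⟩⟩
    simpa using ha₀
  set j := F.max' hFne with hj
  have hjF : j ∈ F := F.max'_mem hFne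
  have hjk : j < k := Finset.mem_range.1 (Finset.mem_filter.1 hjF).1
  have hjS : a₀ + (j : ℕ) ∈ S := (Finset.mem_filter.1 hjF).2
  -- upward propagation of non-membership
  have hup : ∀ t m : ℕ, m + t < k → a₀ + (m : ℕ) ∉ S → a₀ + ((m + t : ℕ)) ∉ S := by
    intro t
    induction t with
    | zero => intro m hm h; simpa using h
    | succ t ih =>
      intro m hm h
      obtain ⟨a, ha, hfa⟩ := hsurj m (by omega)
      rcases hfiber a ha with h1 | h1
      · exact absurd (by rw [hfa] at h1; rw [← h1]; exact ha) h
      · have h2 : a₀ + (m : ℕ) - (k : ℕ) ∈ S := by rw [hfa] at h1; rw [← h1]; exact ha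
        have h3 := hdesc m (by omega) h2
        have := ih (m+1) (by omega) h3
        have he : m + 1 + t = m + (t+1) := by omega
        rwa [he] at this
  have hchar : ∀ m : ℕ, m < k → (a₀ + (m : ℕ) ∈ S ↔ m ≤ j) := by
    intro m hm
    constructor
    · intro h
      exact F.le_max' m (Finset.mem_filter.2 ⟨Finset.mem_range.2 hm, h⟩)
    · intro h
      by_contra hno
      have h2 := hup (j - m) m (by omega) hno
      rw [show m + (j - m) = j by omega] at h2
      exact h2 hjS
  -- the window center
  refine ⟨a₀ + (j : ℕ), ?_⟩
  have hforward : ∀ a ∈ S, (a₀ + (j : ℕ) - a).val < k := by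
    intro a ha
    obtain ⟨m, hm, hfaeq⟩ : ∃ m, m < k ∧ f a = m := ⟨f a, Finset.mem_range.1 (hmaps a ha), rfl⟩
    rcases hfiber a ha with h1 | h1 <;> rw [hfaeq] at h1
    · have hmj : m ≤ j := (hchar m hm).1 (by rw [← h1]; exact ha)
      have heq : a₀ + (j : ℕ) - a = ((j - m : ℕ) : ZMod n) := by
        rw [h1]
        push_cast [Nat.cast_sub hmj]
        ring
      rw [heq, ZMod.val_natCast, Nat.mod_eq_of_lt (by omega)]
      omega
    · have hnot : a₀ + ((m : ℕ) : ZMod n) ∉ S := by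
        intro hmem
        exact hexcl m hm ⟨hmem, by rw [← h1]; exact ha⟩
      have hmj : ¬ (m ≤ j) := fun hle => hnot ((hchar m hm).2 hle)
      have heq : a₀ + (j : ℕ) - a = ((k + j - m : ℕ) : ZMod n) := by
        rw [h1]
        push_cast [Nat.cast_sub (by omega : m ≤ k + j)]
        ring
      rw [heq, ZMod.val_natCast, Nat.mod_eq_of_lt (by omega)]
      omega
  intro a
  constructor
  · exact fun ha => hforward a ha
  · intro ha
    have hsub : S ⊆ Finset.univ.filter (fun a : ZMod n => (a₀ + (j : ℕ) - a).val < k) := by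
      intro b hb
      exact Finset.mem_filter.2 ⟨Finset.mem_univ _, hforward b hb⟩
    have heq : S = Finset.univ.filter (fun a : ZMod n => (a₀ + (j : ℕ) - a).val < k) := by
      apply Finset.eq_of_subset_of_card_le hsub
      rw [card_window hkn, hcard]
    rw [heq]
    exact Finset.mem_filter.2 ⟨Finset.mem_univ _, ha⟩

/-- there is an equivalence mapping a given finset onto another of the same card -/
lemma exists_equiv_image {α β : Type*} [Fintype α] [Fintype β] [DecidableEq α] [DecidableEq β]
    (hcard : Fintype.card α = Fintype.card β) {s : Finset α} {t : Finset β}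
    (hst : s.card = t.card) : ∃ e : α ≃ β, s.image e = t := by
  classical
  have h1 : Fintype.card {x // x ∈ s} = Fintype.card {y // y ∈ t} := by
    simp [Fintype.card_coe, hst]
  have h2 : Fintype.card {x // x ∉ s} = Fintype.card {y // y ∉ t} := by
    have := Fintype.card_subtype_compl (fun x => x ∈ s)
    have := Fintype.card_subtype_compl (fun y => y ∈ t)
    simp_all [Fintype.card_coe, Fintype.card_subtype_compl, hst, hcard]
  obtain e₁ := Fintype.equivOfCardEq h1
  obtain e₂ := Fintype.equivOfCardEq h2
  refine ⟨(Equiv.sumCompl (· ∈ s)).symm.trans ((Equiv.sumCongr e₁ e₂).trans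
    (Equiv.sumCompl (· ∈ t))), ?_⟩
  have hsub : ∀ x ∈ s, ((Equiv.sumCompl (· ∈ s)).symm.trans ((Equiv.sumCongr e₁ e₂).trans
      (Equiv.sumCompl (· ∈ t)))) x ∈ t := by
    intro x hx
    simp only [Equiv.trans_apply]
    rw [Equiv.sumCompl_symm_apply_of_pos hx]
    simp only [Equiv.sumCongr_apply, Sum.map_inl, Equiv.sumCompl_apply_inl]
    exact (e₁ ⟨x, hx⟩).2
  apply Finset.eq_of_subset_of_card_le
  · intro y hy
    obtain ⟨x, hx, rfl⟩ := Finset.mem_image.1 hy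
    exact hsub x hx
  · rw [Finset.card_image_of_injective _ (Equiv.injective _), hst]

/-- number of k-subsets of Fin n containing a fixed element -/
lemma card_star {n k : ℕ} (hk : 1 ≤ k) (hkn : k ≤ n) (x : Fin n) :
    ((Finset.univ.powersetCard k).filter (fun A : Finset (Fin n) => x ∈ A)).card
      = (n - 1).choose (k - 1) := by
  classical
  have key : ((Finset.univ.powersetCard k).filter (fun A : Finset (Fin n) => x ∈ A)).card
      = ((Finset.univ.erase x).powersetCard (k-1)).card := by
    refine Finset.card_bij' (fun A _ => A.erase x) (fun B _ => insert x B) ?_ ?_ ?_ ?_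
    · rintro A hA
      simp only [Finset.mem_filter, Finset.mem_powersetCard] at hA
      obtain ⟨⟨hsub, hcard⟩, hx⟩ := hA
      rw [Finset.mem_powersetCard]
      constructor
      · intro y hy
        simp only [Finset.mem_erase] at hy ⊢
        exact ⟨hy.1, Finset.mem_univ y⟩
      · rw [Finset.card_erase_of_mem hx, hcard]
    · intro B hB
      rw [Finset.mem_powersetCard] at hB
      have hxB : x ∉ B := fun h => by simpa using hB.1 h
      simp only [Finset.mem_filter, Finset.mem_powersetCard]
      refine ⟨⟨Finset.subset_univ _, ?_⟩, Finset.mem_insert_self x B⟩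
      rw [Finset.card_insert_of_notMem hxB, hB.2]
      omega
    · intro A hA
      simp only [Finset.mem_filter] at hA
      exact Finset.insert_erase hA.2
    · intro B hB
      rw [Finset.mem_powersetCard] at hB
      have hxB : x ∉ B := fun h => by simpa using hB.1 h
      exact Finset.erase_insert hxB
  rw [key, Finset.card_powersetCard, Finset.card_erase_of_mem (Finset.mem_univ x),
    Finset.card_univ, Fintype.card_fin]


section Counting
variable [NeZero n]

/-- the set of good arc-starts for a cyclic arrangement -/
def goodS (k : ℕ) (ℬ : Finset (Finset (Fin n))) (σ : ZMod n ≃ Fin n) : Finset (ZMod n) :=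
  Finset.univ.filter (fun a => (arc k a).image σ ∈ ℬ)

lemma image_arc_trans (a c : ZMod n) (σ : ZMod n ≃ Fin n) (β : Fin n ≃ Fin n) :
    (arc k a).image ⇑(((Equiv.addRight c).trans σ).trans β)
      = ((arc k (a + c)).image ⇑σ).image ⇑β := by
  rw [Equiv.coe_trans, ← Finset.image_image]
  congr 1
  rw [Equiv.coe_trans, ← Finset.image_image]
  congr 1
  rw [Equiv.coe_addRight, ← arc_image_add]

lemma fiber_const (hk : 1 ≤ k) (hkn : k ≤ n) {A B : Finset (Fin n)}
    (hA : A.card = k) (hB : B.card = k) (a b : ZMod n) :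
    (Finset.univ.filter (fun σ : ZMod n ≃ Fin n => (arc k a).image ⇑σ = A)).card =
      (Finset.univ.filter (fun σ : ZMod n ≃ Fin n => (arc k b).image ⇑σ = B)).card := by
  classical
  obtain ⟨β, hβ⟩ := exists_equiv_image (α := Fin n) (β := Fin n) rfl (hA.trans hB.symm)
  refine Finset.card_bij' (fun σ _ => ((Equiv.addRight (a - b)).trans σ).trans β)
    (fun τ _ => ((Equiv.addRight (b - a)).trans τ).trans β.symm) ?_ ?_ ?_ ?_
  · intro σ hσ
    simp only [Finset.mem_filter, Finset.mem_univ, true_and] at hσ ⊢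
    rw [image_arc_trans, show b + (a - b) = a by ring, hσ, hβ]
  · intro τ hτ
    simp only [Finset.mem_filter, Finset.mem_univ, true_and] at hτ ⊢
    rw [image_arc_trans, show a + (b - a) = b by ring, hτ, ← hβ,
      Finset.image_image]
    simp
  · intro σ _
    ext p
    simp only [Equiv.trans_apply, Equiv.coe_addRight, Equiv.symm_apply_apply]
    rw [show p + (b - a) + (a - b) = p by ring]
  · intro τ _
    ext p
    simp only [Equiv.trans_apply, Equiv.coe_addRight, Equiv.apply_symm_apply]
    rw [show p + (a - b) + (b - a) = p by ring]

lemma sum_goodS_card (hk : 1 ≤ k) (hkn : k ≤ n) {ℬ : Finset (Finset (Fin n))}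
    (hℬ : ∀ A ∈ ℬ, A.card = k) {A₀ : Finset (Fin n)} (hA₀ : A₀.card = k) :
    ∑ σ : ZMod n ≃ Fin n, (goodS k ℬ σ).card
      = ℬ.card * (n * (Finset.univ.filter
          (fun σ : ZMod n ≃ Fin n => (arc k 0).image ⇑σ = A₀)).card) := by
  classical
  have h1 : ∀ σ : ZMod n ≃ Fin n, (goodS k ℬ σ).card
      = ∑ a : ZMod n, if (arc k a).image ⇑σ ∈ ℬ then 1 else 0 := by
    intro σ
    rw [goodS, Finset.card_filter]
  simp_rw [h1]
  rw [Finset.sum_comm]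
  have h2 : ∀ a : ZMod n, (∑ σ : ZMod n ≃ Fin n, if (arc k a).image ⇑σ ∈ ℬ then 1 else 0)
      = ℬ.card * (Finset.univ.filter
          (fun σ : ZMod n ≃ Fin n => (arc k 0).image ⇑σ = A₀)).card := by
    intro a
    rw [← Finset.card_filter]
    rw [Finset.card_eq_sum_card_fiberwise
      (s := Finset.univ.filter (fun σ : ZMod n ≃ Fin n => (arc k a).image ⇑σ ∈ ℬ))
      (f := fun σ : ZMod n ≃ Fin n => (arc k a).image ⇑σ) (t := ℬ)
      (fun σ hσ => (Finset.mem_filter.1 hσ).2)]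
    rw [Finset.sum_congr rfl (fun A hA => ?_), Finset.sum_const, smul_eq_mul]
    have : Finset.filter (fun σ : ZMod n ≃ Fin n => (arc k a).image ⇑σ = A)
        (Finset.filter (fun σ : ZMod n ≃ Fin n => (arc k a).image ⇑σ ∈ ℬ) Finset.univ)
        = Finset.filter (fun σ : ZMod n ≃ Fin n => (arc k a).image ⇑σ = A) Finset.univ := by
      rw [Finset.filter_filter]
      apply Finset.filter_congr
      intro σ _
      constructor
      · rintro ⟨_, h⟩; exact h
      · rintro h; exact ⟨by rw [h]; exact hA, h⟩
    rw [this]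
    exact fiber_const hk hkn (hℬ A hA) hA₀ a 0
  rw [Finset.sum_congr rfl (fun a _ => h2 a), Finset.sum_const, smul_eq_mul]
  have : (Finset.univ : Finset (ZMod n)).card = n := by
    rw [Finset.card_univ, ZMod.card]
  rw [this]
  ring

/-- for the star family, every cyclic arrangement has exactly `k` good arcs -/
lemma goodS_star (hk : 1 ≤ k) (hkn : k ≤ n) (x : Fin n) (σ : ZMod n ≃ Fin n) :
    (goodS k ((Finset.univ.powersetCard k).filter (fun A : Finset (Fin n) => x ∈ A)) σ).card
      = k := by
  classical
  have : goodS k ((Finset.univ.powersetCard k).filter (fun A : Finset (Fin n) => x ∈ A)) σ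
      = Finset.univ.filter (fun a : ZMod n => (σ.symm x - a).val < k) := by
    ext a
    simp only [goodS, Finset.mem_filter, Finset.mem_univ, true_and,
      Finset.mem_powersetCard_univ]
    rw [Finset.card_image_of_injective _ σ.injective, card_arc hkn]
    simp only [true_and]
    rw [← mem_arc hkn]
    constructor
    · intro hx
      obtain ⟨p, hp, hpx⟩ := Finset.mem_image.1 hx
      rwa [← hpx, Equiv.symm_apply_apply]
    · intro hx
      exact Finset.mem_image.2 ⟨σ.symm x, hx, Equiv.apply_symm_apply σ x⟩
  rw [this, card_window hkn]


end Counting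

section Step
variable [NeZero n]

/-- arcs not starting at the two critical starts are stable under an adjacent swap -/
lemma swap_arc_image (hk2 : 2 ≤ k) (hn : 2 * k + 1 ≤ n) (u a : ZMod n)
    (h1 : a ≠ u - ((k - 1 : ℕ) : ZMod n)) (h2 : a ≠ u + 1) :
    (arc k a).image ⇑(Equiv.swap u (u + 1)) = arc k a := by
  classical
  haveI : Fact (1 < n) := ⟨by omega⟩
  have hkn : k ≤ n := by omega
  set α := (u - a).val with hα
  have hval1 : (1 : ZMod n).val = 1 := ZMod.val_one n
  have hβ := val_add_disj (n := n) (u - a) 1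
  rw [hval1] at hβ
  have hrel : u + 1 - a = (u - a) + 1 := by ring
  have hαlt := ZMod.val_lt (u - a)
  have hβlt := ZMod.val_lt (u + 1 - a)
  rw [← hrel] at hβ
  have hne2 : (u + 1 - a).val ≠ 0 := by
    intro h
    exact h2 (by
      have : u + 1 - a = 0 := (ZMod.val_eq_zero _).1 h
      have := sub_eq_zero.1 this
      exact this.symm)
  have hne1 : α ≠ k - 1 := by
    intro h
    apply h1
    have : u - a = ((k - 1 : ℕ) : ZMod n) := by rw [← cast_val_eq (u - a), ← hα, h]
    have h3 := sub_eq_iff_eq_add.1 this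
    rw [h3]; ring
  have hiff : u ∈ arc k a ↔ u + 1 ∈ arc k a := by
    rw [mem_arc hkn, mem_arc hkn, ← hα]
    omega
  have hmaps : ∀ x ∈ arc k a, Equiv.swap u (u + 1) x ∈ arc k a := by
    intro x hx
    by_cases hxu : x = u
    · rw [hxu, Equiv.swap_apply_left]
      exact hiff.1 (hxu ▸ hx)
    · by_cases hxu1 : x = u + 1
      · rw [hxu1, Equiv.swap_apply_right]
        exact hiff.2 (hxu1 ▸ hx)
      · rw [Equiv.swap_apply_of_ne_of_ne hxu hxu1]
        exact hx
  apply Finset.eq_of_subset_of_card_le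
  · intro y hy
    obtain ⟨x, hx, rfl⟩ := Finset.mem_image.1 hy
    exact hmaps x hx
  · rw [Finset.card_image_of_injective _ (Equiv.injective _)]

/-- main probe lemma: two windows agreeing off two points are at distance ≤ 1 -/
lemma probe_main (hk2 : 2 ≤ k) (hn : 2 * k + 1 ≤ n) (q q' b1 b2 : ZMod n)
    (hcong : ∀ a : ZMod n, a ≠ b1 → a ≠ b2 → ((q - a).val < k ↔ (q' - a).val < k))
    (hne : q ≠ q') (hd2 : 2 ≤ (q - q').val) (hdk : (q - q').val ≤ n - k) : False := by
  haveI : Fact (1 < n) := ⟨by omega⟩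
  have hval1 : (1 : ZMod n).val = 1 := ZMod.val_one n
  have hsum := val_sub_add_val hne
  set d := (q - q').val with hd
  -- probe 1 : q
  have hp1 : q = b1 ∨ q = b2 := by
    by_contra h
    push_neg at h
    have hiff := hcong q h.1 h.2
    rw [sub_self, ZMod.val_zero] at hiff
    omega
  -- probe 2 : q - 1
  have hp2 : q - 1 = b1 ∨ q - 1 = b2 := by
    by_contra h
    push_neg at h
    have hiff := hcong (q - 1) h.1 h.2
    have e1 : q - (q - 1) = (1 : ZMod n) := by ring
    have e2 : q' - (q - 1) = (q' - q) + 1 := by ring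
    have hadd := val_add_disj (n := n) (q' - q) 1
    rw [hval1, ← e2] at hadd
    have hlt := ZMod.val_lt (q' - (q - 1))
    rw [e1, hval1] at hiff
    omega
  -- probe 3 : q' - (k-1)
  have hp3 : q' - ((k - 1 : ℕ) : ZMod n) = b1 ∨ q' - ((k - 1 : ℕ) : ZMod n) = b2 := by
    by_contra h
    push_neg at h
    have hiff := hcong _ h.1 h.2
    have hvk : (((k - 1 : ℕ) : ZMod n)).val = k - 1 := by
      rw [ZMod.val_natCast, Nat.mod_eq_of_lt (by omega)]
    have e1 : q' - (q' - ((k - 1 : ℕ) : ZMod n)) = ((k - 1 : ℕ) : ZMod n) := by ring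
    have e2 : q - (q' - ((k - 1 : ℕ) : ZMod n)) = (q - q') + ((k - 1 : ℕ) : ZMod n) := by ring
    have hadd := val_add_disj (n := n) (q - q') ((k - 1 : ℕ) : ZMod n)
    rw [hvk, ← e2] at hadd
    have hlt := ZMod.val_lt (q - (q' - ((k - 1 : ℕ) : ZMod n)))
    rw [e1, hvk] at hiff
    omega
  -- distinctness of probes
  have hone : (1 : ZMod n) ≠ 0 := one_ne_zero
  have hd12 : q ≠ q - 1 := by
    intro h
    apply hone
    linear_combination h
  have hd13 : q ≠ q' - ((k - 1 : ℕ) : ZMod n) := by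
    intro h
    have hqq : q - q' = -((k - 1 : ℕ) : ZMod n) := by linear_combination h
    have hkne : (((k - 1 : ℕ) : ZMod n)) ≠ 0 := by
      intro hz
      have := congrArg ZMod.val hz
      rw [ZMod.val_natCast, Nat.mod_eq_of_lt (by omega), ZMod.val_zero] at this
      omega
    have := congrArg ZMod.val hqq
    rw [ZMod.neg_val, if_neg hkne, ZMod.val_natCast, Nat.mod_eq_of_lt (by omega)] at this
    omega
  have hd23 : q - 1 ≠ q' - ((k - 1 : ℕ) : ZMod n) := by
    intro h
    have hqq : q - q' = 1 - ((k - 1 : ℕ) : ZMod n) := by linear_combination h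
    by_cases hk2' : k = 2
    · rw [hk2'] at hqq
      norm_num at hqq
      have := congrArg ZMod.val hqq
      rw [ZMod.val_zero] at this
      omega
    · have hqq2 : q - q' = -((k - 2 : ℕ) : ZMod n) := by
        rw [hqq]
        push_cast [Nat.cast_sub (by omega : 1 ≤ k), Nat.cast_sub (by omega : 2 ≤ k)]
        ring
      have hkne : (((k - 2 : ℕ) : ZMod n)) ≠ 0 := by
        intro hz
        have := congrArg ZMod.val hz
        rw [ZMod.val_natCast, Nat.mod_eq_of_lt (by omega), ZMod.val_zero] at this
        omega
      have := congrArg ZMod.val hqq2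
      rw [ZMod.neg_val, if_neg hkne, ZMod.val_natCast, Nat.mod_eq_of_lt (by omega)] at this
      omega
  rcases hp1 with h1 | h1 <;> rcases hp2 with h2 | h2 <;> rcases hp3 with h3 | h3
  · exact hd12 (h1.trans h2.symm)
  · exact hd12 (h1.trans h2.symm)
  · exact hd13 (h1.trans h3.symm)
  · exact hd23 (h2.trans h3.symm)
  · exact hd23 (h2.trans h3.symm)
  · exact hd13 (h1.trans h3.symm)
  · exact hd12 (h1.trans h2.symm)
  · exact hd12 (h1.trans h2.symm)

/-- key step lemma: an adjacent swap away from the window center leaves the center fixed -/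
lemma step_lemma (hk2 : 2 ≤ k) (hn : 2 * k + 1 ≤ n) {ℬ : Finset (Finset (Fin n))}
    (σ : ZMod n ≃ Fin n) (u : ZMod n) {q q' : ZMod n}
    (hq : ∀ a, (arc k a).image ⇑σ ∈ ℬ ↔ (q - a).val < k)
    (hq' : ∀ a, (arc k a).image ⇑((Equiv.swap u (u + 1)).trans σ) ∈ ℬ ↔ (q' - a).val < k)
    (hu : u ≠ q) (hu1 : u + 1 ≠ q) : q' = q := by
  classical
  haveI : Fact (1 < n) := ⟨by omega⟩
  have hval1 : (1 : ZMod n).val = 1 := ZMod.val_one n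
  have hkn : k ≤ n := by omega
  have hcong : ∀ a : ZMod n, a ≠ u - ((k - 1 : ℕ) : ZMod n) → a ≠ u + 1 →
      ((q - a).val < k ↔ (q' - a).val < k) := by
    intro a h1 h2
    have himg : (arc k a).image ⇑((Equiv.swap u (u + 1)).trans σ) = (arc k a).image ⇑σ := by
      rw [Equiv.coe_trans, ← Finset.image_image, swap_arc_image hk2 hn u a h1 h2]
    rw [← hq a, ← hq' a, himg]
  by_contra hne'
  have hne : q ≠ q' := fun h => hne' h.symm
  have hsum := val_sub_add_val hne
  have hdne : (q - q').val ≠ 0 := by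
    intro h
    exact hne (sub_eq_zero.1 ((ZMod.val_eq_zero _).1 h))
  have hene : (q' - q).val ≠ 0 := by
    intro h
    exact hne' (sub_eq_zero.1 ((ZMod.val_eq_zero _).1 h))
  have hvk : (((k - 1 : ℕ) : ZMod n)).val = k - 1 := by
    rw [ZMod.val_natCast, Nat.mod_eq_of_lt (by omega)]
  have hvkk : (((k : ℕ) : ZMod n)).val = k := by
    rw [ZMod.val_natCast, Nat.mod_eq_of_lt (by omega)]
  have hkcast : ((k : ℕ) : ZMod n) ≠ 0 := by
    intro h
    have := congrArg ZMod.val h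
    rw [ZMod.val_natCast, Nat.mod_eq_of_lt (by omega), ZMod.val_zero] at this
    omega
  have h2kcast : ((2 * k : ℕ) : ZMod n) ≠ 0 := by
    intro h
    have := congrArg ZMod.val h
    rw [ZMod.val_natCast, Nat.mod_eq_of_lt (by omega), ZMod.val_zero] at this
    omega
  have hk1cast : ((k - 1 : ℕ) : ZMod n) = ((k : ℕ) : ZMod n) - 1 := by
    push_cast [Nat.cast_sub (by omega : 1 ≤ k)]
    ring
  rcases eq_or_ne (q - q').val 1 with hd1 | hd1
  · have hq'eq : q' = q - 1 := by
      have h0 : q - q' = ((1 : ℕ) : ZMod n) := by rw [← cast_val_eq (q - q'), hd1]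
      push_cast at h0
      linear_combination -h0
    have hp1 : q = u - ((k - 1 : ℕ) : ZMod n) ∨ q = u + 1 := by
      by_contra h
      push_neg at h
      have hiff := hcong q h.1 h.2
      rw [sub_self, ZMod.val_zero] at hiff
      omega
    have hqb : q = u - ((k - 1 : ℕ) : ZMod n) := by
      rcases hp1 with h | h
      · exact h
      · exact absurd h.symm hu1
    have hp2 : q - ((k : ℕ) : ZMod n) = u - ((k - 1 : ℕ) : ZMod n)
        ∨ q - ((k : ℕ) : ZMod n) = u + 1 := by
      by_contra h
      push_neg at h
      have hiff := hcong _ h.1 h.2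
      have e1 : q - (q - ((k : ℕ) : ZMod n)) = ((k : ℕ) : ZMod n) := by ring
      have e2 : q' - (q - ((k : ℕ) : ZMod n)) = ((k : ℕ) : ZMod n) - 1 := by
        rw [hq'eq]; ring
      rw [e1, hvkk, e2, ← hk1cast, hvk] at hiff
      omega
    rcases hp2 with h | h
    · rw [← hqb] at h
      exact hkcast (by linear_combination -h)
    · apply h2kcast
      have h2 : ((2 * k : ℕ) : ZMod n) = ((k : ℕ) : ZMod n) + ((k : ℕ) : ZMod n) := by
        push_cast; ring
      rw [h2]
      rw [hk1cast] at hqb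
      linear_combination hqb - h
  rcases eq_or_ne (q' - q).val 1 with he1 | he1
  · have hqeq : q' = q + 1 := by
      have h0 : q' - q = ((1 : ℕ) : ZMod n) := by rw [← cast_val_eq (q' - q), he1]
      push_cast at h0
      linear_combination h0
    have hp1 : q' = u - ((k - 1 : ℕ) : ZMod n) ∨ q' = u + 1 := by
      by_contra h
      push_neg at h
      have hiff := hcong q' h.1 h.2
      rw [sub_self, ZMod.val_zero] at hiff
      omega
    have hqb : q' = u - ((k - 1 : ℕ) : ZMod n) := by
      rcases hp1 with h | h
      · exact h
      · exfalso
        have h3 : q + 1 = u + 1 := by rw [← hqeq, h]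
        exact hu (add_right_cancel h3).symm
    have hp2 : q' - ((k : ℕ) : ZMod n) = u - ((k - 1 : ℕ) : ZMod n)
        ∨ q' - ((k : ℕ) : ZMod n) = u + 1 := by
      by_contra h
      push_neg at h
      have hiff := hcong _ h.1 h.2
      have e1 : q' - (q' - ((k : ℕ) : ZMod n)) = ((k : ℕ) : ZMod n) := by ring
      have e2 : q - (q' - ((k : ℕ) : ZMod n)) = ((k : ℕ) : ZMod n) - 1 := by
        rw [hqeq]; ring
      rw [e2, ← hk1cast, hvk, e1, hvkk] at hiff
      omega
    rcases hp2 with h | h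
    · rw [← hqb] at h
      exact hkcast (by linear_combination -h)
    · apply h2kcast
      have h2 : ((2 * k : ℕ) : ZMod n) = ((k : ℕ) : ZMod n) + ((k : ℕ) : ZMod n) := by
        push_cast; ring
      rw [h2]
      rw [hk1cast] at hqb
      linear_combination hqb - h
  have hd2 : 2 ≤ (q - q').val := by omega
  have he2 : 2 ≤ (q' - q).val := by omega
  rcases le_or_gt (q - q').val (n - k) with hdk | hdk
  · exact probe_main hk2 hn q q' _ _ hcong hne hd2 hdk
  · have hek : (q' - q).val ≤ n - k := by omega
    exact probe_main hk2 hn q' q _ _ (fun a h1 h2 => (hcong a h1 h2).symm) hne' he2 hek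
end Step

/-- every permutation fixing `q₀` is generated by adjacent swaps avoiding `q₀` -/
lemma gen_stabilizer [NeZero n] (hn : 3 ≤ n) (q₀ : ZMod n) (π : Equiv.Perm (ZMod n))
    (hπ : π q₀ = q₀) :
    π ∈ Submonoid.closure
      {τ : Equiv.Perm (ZMod n) | ∃ u : ZMod n, u ≠ q₀ ∧ u + 1 ≠ q₀ ∧ τ = Equiv.swap u (u + 1)} := by
  classical
  obtain ⟨N, hN⟩ : ∃ N, n = N + 2 := ⟨n - 2, by omega⟩
  -- the equivalence of Fin (N+1) with the complement of q₀
  have hcast : ∀ m : ℕ, m < n → (((m : ℕ) : ZMod n)).val = m := fun m hm => by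
    rw [ZMod.val_natCast, Nat.mod_eq_of_lt hm]
  have hne0 : ∀ m : ℕ, 0 < m → m < n → ((m : ℕ) : ZMod n) ≠ 0 := by
    intro m h1 h2 h
    have := congrArg ZMod.val h
    rw [hcast m h2, ZMod.val_zero] at this
    omega
  set e : Fin (N + 1) ≃ {p : ZMod n // p ≠ q₀} :=
    { toFun := fun i => ⟨q₀ + ((i.val + 1 : ℕ) : ZMod n), by
        intro h
        have h2 : ((i.val + 1 : ℕ) : ZMod n) = 0 := by linear_combination h
        exact hne0 _ (by omega) (by omega : i.val + 1 < n) h2⟩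
      invFun := fun p => ⟨(p.val - q₀).val - 1, by
        have := ZMod.val_lt (p.val - q₀)
        omega⟩
      left_inv := by
        intro i
        ext
        simp only
        have h1 : q₀ + ((i.val + 1 : ℕ) : ZMod n) - q₀ = ((i.val + 1 : ℕ) : ZMod n) := by ring
        rw [h1, hcast _ (by omega : i.val + 1 < n)]
        omega
      right_inv := by
        rintro ⟨p, hp⟩
        ext
        simp only
        have hval : (p - q₀).val ≠ 0 := by
          intro h
          exact hp (sub_eq_zero.1 ((ZMod.val_eq_zero _).1 h))
        rw [show (p - q₀).val - 1 + 1 = (p - q₀).val by omega, cast_val_eq]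
        ring } with he
  have hperm : ∀ p : ZMod n, p ≠ q₀ ↔ π p ≠ q₀ := by
    intro p
    constructor
    · intro h hc
      exact h (π.injective (hc.trans hπ.symm))
    · intro h hc
      exact h (by rw [hc, hπ])
  set π₀ : Equiv.Perm {p : ZMod n // p ≠ q₀} := π.subtypePerm (fun p => (hperm p).symm) with hπ₀
  set π₁ : Equiv.Perm (Fin (N + 1)) := e.permCongr.symm π₀ with hπ₁
  have hmem : π₁ ∈ (⊤ : Submonoid (Equiv.Perm (Fin (N + 1)))) := trivial
  rw [← Equiv.Perm.mclosure_swap_castSucc_succ N] at hmem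
  have key : ∀ (τ : Equiv.Perm (Fin (N + 1))),
      τ ∈ Submonoid.closure (Set.range fun i : Fin N => Equiv.swap i.castSucc i.succ) →
      Equiv.Perm.ofSubtype (e.permCongr τ) ∈ Submonoid.closure
        {τ : Equiv.Perm (ZMod n) | ∃ u : ZMod n, u ≠ q₀ ∧ u + 1 ≠ q₀ ∧ τ = Equiv.swap u (u + 1)} := by
    intro τ hτ
    induction hτ using Submonoid.closure_induction with
    | mem x hx =>
      obtain ⟨i, rfl⟩ := hx
      have hcongr : e.permCongr (Equiv.swap i.castSucc i.succ)
          = Equiv.swap (e i.castSucc) (e i.succ) := by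
        rw [Equiv.permCongr_def, Equiv.symm_trans_swap_trans]
      rw [hcongr, Equiv.Perm.ofSubtype_swap_eq]
      apply Submonoid.subset_closure
      have h1 : (e i.castSucc).1 = q₀ + ((i.val + 1 : ℕ) : ZMod n) := by
        show q₀ + ((i.castSucc.val + 1 : ℕ) : ZMod n) = _
        rw [Fin.coe_castSucc]
      refine ⟨q₀ + ((i.val + 1 : ℕ) : ZMod n), by rw [← h1]; exact (e i.castSucc).2, ?_, ?_⟩
      · have : q₀ + ((i.val + 1 : ℕ) : ZMod n) + 1 = q₀ + ((i.val + 2 : ℕ) : ZMod n) := by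
          push_cast; ring
        rw [this]
        have h2 : (e i.succ).1 = q₀ + ((i.val + 2 : ℕ) : ZMod n) := by
          show q₀ + ((i.succ.val + 1 : ℕ) : ZMod n) = _
          rw [Fin.val_succ]
        rw [← h2]
        exact (e i.succ).2
      · have h1 : (e i.castSucc).1 = q₀ + ((i.val + 1 : ℕ) : ZMod n) := by
          show q₀ + ((i.castSucc.val + 1 : ℕ) : ZMod n) = _
          rw [Fin.coe_castSucc]
        have h2 : (e i.succ).1 = q₀ + ((i.val + 2 : ℕ) : ZMod n) := by
          show q₀ + ((i.succ.val + 1 : ℕ) : ZMod n) = _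
          rw [Fin.val_succ]
        have : q₀ + ((i.val + 1 : ℕ) : ZMod n) + 1 = q₀ + ((i.val + 2 : ℕ) : ZMod n) := by
          push_cast; ring
        rw [h1, h2, this]
    | one =>
      have h1 : e.permCongr (1 : Equiv.Perm (Fin (N + 1))) = 1 := by
        ext x
        simp
      rw [h1, map_one]
      exact Submonoid.one_mem _
    | mul x y hx hy ihx ihy =>
      have h1 : e.permCongr (x * y) = e.permCongr x * e.permCongr y := by
        ext p
        simp [Equiv.Perm.mul_apply]
      rw [h1, map_mul]
      exact Submonoid.mul_mem _ ihx ihy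
  have := key π₁ hmem
  rwa [Equiv.apply_symm_apply, hπ₀, Equiv.Perm.ofSubtype_subtypePerm (fun p => (hperm p).symm)
    (fun x hx => by
      intro hc
      apply hx
      rw [hc, hπ])] at this

end EKR

open EKR Finset

/-- Erdős–Ko–Rado. If `k ≥ 1`, `n ≥ 2k` and `𝒜` is a family of `k`-element
subsets of `{1,…,n}` any two of which intersect (an independent set of the Kneser graph
`K(n,k)`), then `|𝒜| ≤ C(n-1, k-1)`; moreover if `n > 2k` and equality holds then `𝒜` is the
family of all `k`-subsets containing some fixed element `x`. -/
theorem stmt_2 (n k : ℕ) (hk : 1 ≤ k) (hn : 2 * k ≤ n)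
    (𝒜 : Finset (Finset (Fin n)))
    (hcard : ∀ A ∈ 𝒜, A.card = k)
    (hint : ∀ A ∈ 𝒜, ∀ B ∈ 𝒜, (A ∩ B).Nonempty) :
    𝒜.card ≤ (n - 1).choose (k - 1) ∧
      (2 * k < n → 𝒜.card = (n - 1).choose (k - 1) →
        ∃ x : Fin n,
          𝒜 = (Finset.univ.powersetCard k).filter (fun A : Finset (Fin n) => x ∈ A)) := by
  classical
  constructor
  · apply Finset.erdos_ko_rado (r := k)
    · intro A hA B hB
      intro hdisj
      obtain ⟨x, hx⟩ := hint A hA B hB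
      rw [Finset.mem_inter] at hx
      exact (Finset.disjoint_left.1 hdisj) hx.1 hx.2
    · intro A hA
      exact hcard A hA
    · rw [Nat.le_div_iff_mul_le (by norm_num)]
      omega
  intro hlt heq
  haveI : NeZero n := ⟨by omega⟩
  -- the case k = 1
  rcases eq_or_lt_of_le hk with hk1 | hk2
  · -- k = 1
    rw [← hk1] at heq hcard hlt ⊢
    simp only [Nat.sub_self, Nat.choose_zero_right] at heq
    obtain ⟨A, hA⟩ := Finset.card_eq_one.1 heq
    obtain ⟨x, hx⟩ := Finset.card_eq_one.1 (hcard A (hA ▸ Finset.mem_singleton_self A))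
    refine ⟨x, ?_⟩
    rw [hA, hx]
    ext B
    simp only [Finset.mem_singleton, Finset.mem_filter, Finset.mem_powersetCard_univ]
    constructor
    · rintro rfl
      exact ⟨Finset.card_singleton x, Finset.mem_singleton_self x⟩
    · rintro ⟨hB1, hB2⟩
      obtain ⟨y, rfl⟩ := Finset.card_eq_one.1 hB1
      rw [Finset.mem_singleton] at hB2
      rw [hB2]
  · -- now 2 ≤ k and n ≥ 2k+1
    have hk2 : 2 ≤ k := hk2
    have hn' : 2 * k + 1 ≤ n := hlt
    have hkn : k ≤ n := by omega
    have hn3 : 3 ≤ n := by omega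
    -- a fixed k-set
    obtain ⟨A₀, -, hA₀⟩ := Finset.exists_subset_card_eq (s := (Finset.univ : Finset (Fin n))) (n := k)
      (by rw [Finset.card_univ, Fintype.card_fin]; omega)
    -- fixed element for the comparison star
    have hnpos : 0 < n := by omega
    set xs : Fin n := ⟨0, hnpos⟩ with hxs
    set 𝒮 : Finset (Finset (Fin n)) :=
      (Finset.univ.powersetCard k).filter (fun A : Finset (Fin n) => xs ∈ A) with h𝒮
    have h𝒮unif : ∀ A ∈ 𝒮, A.card = k := by
      intro A hA
      rw [h𝒮, Finset.mem_filter, Finset.mem_powersetCard_univ] at hA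
      exact hA.1
    have h𝒮card : 𝒮.card = (n - 1).choose (k - 1) := card_star hk hkn xs
    -- pointwise bound and star value
    have hle : ∀ σ : ZMod n ≃ Fin n, (goodS k 𝒜 σ).card ≤ k := by
      intro σ
      apply card_le_of_pairwise_arcs hk hn
      intro a ha b hb
      rw [goodS, Finset.mem_filter] at ha hb
      have := hint _ ha.2 _ hb.2
      rw [← Finset.image_inter _ _ σ.injective] at this
      exact Finset.image_nonempty.1 this
    have hsum𝒜 := sum_goodS_card (n := n) hk hkn hcard hA₀
    have hsum𝒮 := sum_goodS_card (n := n) hk hkn h𝒮unif hA₀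
    have hsums : ∑ σ : ZMod n ≃ Fin n, (goodS k 𝒜 σ).card
        = ∑ σ : ZMod n ≃ Fin n, (goodS k 𝒮 σ).card := by
      rw [hsum𝒜, hsum𝒮, heq, h𝒮card]
    have hgood : ∀ σ : ZMod n ≃ Fin n, (goodS k 𝒜 σ).card = k := by
      have h := (Finset.sum_eq_sum_iff_of_le (s := (Finset.univ : Finset (ZMod n ≃ Fin n)))
        (f := fun σ => (goodS k 𝒜 σ).card) (g := fun σ => (goodS k 𝒮 σ).card)
        (fun σ _ => (hle σ).trans_eq (goodS_star hk hkn xs σ).symm)).1 hsums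
      intro σ
      rw [h σ (Finset.mem_univ σ), goodS_star hk hkn xs σ]
    -- choose the window center for each arrangement
    have hQex : ∀ σ : ZMod n ≃ Fin n, ∃ q : ZMod n,
        ∀ a, (arc k a).image ⇑σ ∈ 𝒜 ↔ (q - a).val < k := by
      intro σ
      obtain ⟨q, hq⟩ := window_of_card hk hn' (hgood σ) (by
        intro a ha b hb
        rw [goodS, Finset.mem_filter] at ha hb
        have := hint _ ha.2 _ hb.2
        rw [← Finset.image_inter _ _ σ.injective] at this
        exact Finset.image_nonempty.1 this)
      refine ⟨q, fun a => ?_⟩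
      rw [← hq a, goodS, Finset.mem_filter]
      simp
    set Q : (ZMod n ≃ Fin n) → ZMod n := fun σ => Classical.choose (hQex σ) with hQdef
    have hQ : ∀ (σ : ZMod n ≃ Fin n) (a : ZMod n),
        (arc k a).image ⇑σ ∈ 𝒜 ↔ (Q σ - a).val < k :=
      fun σ => Classical.choose_spec (hQex σ)
    -- base arrangement
    obtain ⟨σ₀⟩ : Nonempty (ZMod n ≃ Fin n) := by
      refine ⟨Fintype.equivOfCardEq ?_⟩
      rw [ZMod.card, Fintype.card_fin]
    set q₀ : ZMod n := Q σ₀ with hq₀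
    set x₀ : Fin n := σ₀ q₀ with hx₀
    -- the walk
    have walk : ∀ π ∈ Submonoid.closure
        {τ : Equiv.Perm (ZMod n) | ∃ u : ZMod n, u ≠ q₀ ∧ u + 1 ≠ q₀ ∧ τ = Equiv.swap u (u + 1)},
        ∀ σ : ZMod n ≃ Fin n, Q σ = q₀ → Q (π.trans σ) = q₀ := by
      intro π hπ
      induction hπ using Submonoid.closure_induction with
      | mem τ hτ =>
        obtain ⟨u, hu, hu1, rfl⟩ := hτ
        intro σ hσ
        have := step_lemma hk2 hn' σ u (hQ σ) (hQ ((Equiv.swap u (u + 1)).trans σ))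
          (by rw [hσ]; exact hu) (by rw [hσ]; exact hu1)
        rw [this, hσ]
      | one =>
        intro σ hσ
        have : (1 : Equiv.Perm (ZMod n)).trans σ = σ := by
          ext p; rfl
        rw [this, hσ]
      | mul a b ha hb iha ihb =>
        intro σ hσ
        have : (a * b).trans σ = b.trans (a.trans σ) := by
          ext p; rfl
        rw [this]
        exact ihb _ (iha _ hσ)
    -- every member of 𝒜 contains x₀
    have hmain : ∀ A ∈ 𝒜, x₀ ∈ A := by
      intro A hA
      by_contra hx
      -- build τ with τ q₀ = x₀ and arc (q₀+1) ↦ A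
      have hq₀arc : q₀ ∉ arc k (q₀ + 1) := by
        rw [mem_arc hkn]
        intro h
        have h1 : q₀ - (q₀ + 1) = -1 := by ring
        haveI : Fact (1 < n) := ⟨by omega⟩
        have h2 : (-1 : ZMod n).val = n - 1 := by
          rw [ZMod.neg_val, if_neg (one_ne_zero), ZMod.val_one]
        rw [h1, h2] at h
        omega
      obtain ⟨τ₁, hτ₁⟩ := exists_equiv_image (α := ZMod n) (β := Fin n)
        (by rw [ZMod.card, Fintype.card_fin])
        (s := arc k (q₀ + 1)) (t := A)
        (by rw [card_arc hkn, hcard A hA])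
      have hτ₁q : τ₁ q₀ ∉ A := by
        intro h
        rw [← hτ₁] at h
        obtain ⟨p, hp, hpe⟩ := Finset.mem_image.1 h
        exact hq₀arc (by rwa [τ₁.injective hpe] at hp)
      set τ : ZMod n ≃ Fin n := τ₁.trans (Equiv.swap (τ₁ q₀) x₀) with hτ
      have hτq : τ q₀ = x₀ := by
        rw [hτ]
        simp [Equiv.swap_apply_left]
      have hτim : (arc k (q₀ + 1)).image ⇑τ = A := by
        rw [hτ, Equiv.coe_trans, ← Finset.image_image, hτ₁]
        have : ∀ y ∈ A, Equiv.swap (τ₁ q₀) x₀ y = y := by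
          intro y hy
          exact Equiv.swap_apply_of_ne_of_ne (fun h => hτ₁q (h ▸ hy)) (fun h => hx (h ▸ hy))
        rw [show A.image (⇑(Equiv.swap (τ₁ q₀) x₀)) = A.image id from
          Finset.image_congr (fun y hy => this y (Finset.mem_coe.1 hy)), Finset.image_id]
      -- τ is reachable
      set π : Equiv.Perm (ZMod n) := τ.trans σ₀.symm with hπ
      have hπq : π q₀ = q₀ := by
        rw [hπ]
        simp only [Equiv.trans_apply]
        rw [hτq, hx₀]
        exact σ₀.symm_apply_apply q₀
      have hπσ : π.trans σ₀ = τ := by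
        ext p
        simp [hπ]
      have hQτ : Q τ = q₀ := by
        rw [← hπσ]
        exact walk π (gen_stabilizer hn3 q₀ π hπq) σ₀ rfl
      have hbad := (hQ τ (q₀ + 1)).1 (by rw [hτim]; exact hA)
      rw [hQτ] at hbad
      have h1 : q₀ - (q₀ + 1) = -1 := by ring
      haveI : Fact (1 < n) := ⟨by omega⟩
      have h2 : (-1 : ZMod n).val = n - 1 := by
        rw [ZMod.neg_val, if_neg (one_ne_zero), ZMod.val_one]
      rw [h1, h2] at hbad
      omega
    -- conclude
    refine ⟨x₀, ?_⟩
    have hsub : 𝒜 ⊆ (Finset.univ.powersetCard k).filter (fun A : Finset (Fin n) => x₀ ∈ A) := by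
      intro A hA
      rw [Finset.mem_filter, Finset.mem_powersetCard_univ]
      exact ⟨hcard A hA, hmain A hA⟩
    apply Finset.eq_of_subset_of_card_le hsub
    rw [heq, card_star hk hkn x₀]
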